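/- Let R ⊆ ℤ² be a finite simply connected region and let h be a hall of R, with u and u' its two neighbors in R. Then h is an articulation point of R: there is no path in the subgraph induced on R \ {h} from u to u'; equivalently, u and u' lie in different connected components of R \ {h}, so deleting h disconnects R. -/

import Mathlib

/-- The grid graph on ℤ²: two vertices are adjacent iff their Manhattan distance is 1. -/
def gridGraph : SimpleGraph (ℤ × ℤ) where
  Adj a b := (a.1 - b.1).natAbs + (a.2 - b.2).natAbs = 1
  symm := ⟨by intro a b h; first | omega | (beta_reduce at *; omega)⟩
  loopless := ⟨by intro a h; first | omega | (beta_reduce at *; omega)⟩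

/-- The set of neighbors of `v` (in the grid graph) lying in `R`. -/
def nbrsIn (R : Set (ℤ × ℤ)) (v : ℤ × ℤ) : Set (ℤ × ℤ) :=
  {u | u ∈ R ∧ gridGraph.Adj v u}

/-- `R` is simply connected: both `R` and its complement induce connected subgraphs. -/
def SimplyConnected (R : Set (ℤ × ℤ)) : Prop :=
  (gridGraph.induce R).Connected ∧ (gridGraph.induce Rᶜ).Connected

/-- `v` is a corner of `R`: either it has at most one neighbor in `R`, or it has exactly
two neighbors `u, u'` in `R` and they have a common grid-neighbor `w ∈ R` distinct from `v`. -/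
def IsGridCorner (R : Set (ℤ × ℤ)) (v : ℤ × ℤ) : Prop :=
  v ∈ R ∧
    ((nbrsIn R v).ncard ≤ 1 ∨
      ∃ u u' : ℤ × ℤ, u ≠ u' ∧ nbrsIn R v = {u, u'} ∧
        ∃ w : ℤ × ℤ, w ∈ R ∧ w ≠ v ∧ gridGraph.Adj u w ∧ gridGraph.Adj u' w)

namespace HallAux

abbrev P2 := ℤ × ℤ

/-- Grid adjacency, unfolded. -/
def Adj1 (a b : P2) : Prop := (a.1 - b.1).natAbs + (a.2 - b.2).natAbs = 1

lemma Adj1.symm {a b : P2} (h : Adj1 a b) : Adj1 b a := by unfold Adj1 at *; omega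

lemma pext {a b : P2} (h1 : a.1 = b.1) (h2 : a.2 = b.2) : a = b := by
  cases a; cases b; simp_all

/-- Crossing indicator (mod 2): does the step `a → b` cross the horizontal ray going right
from the center of the unit cell whose lower-left corner is `(p1, p2)`? -/
def cross (p1 p2 : ℤ) (a b : P2) : ZMod 2 :=
  if p1 < a.1 ∧ a.1 = b.1 ∧ ((a.2 = p2 ∧ b.2 = p2 + 1) ∨ (a.2 = p2 + 1 ∧ b.2 = p2)) then 1
  else 0

/-- Indicator: step `a → b` traverses the horizontal edge from `(q1,q2)` to `(q1+1,q2)`. -/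
def usedH (q1 q2 : ℤ) (a b : P2) : ZMod 2 :=
  if (a.1 = q1 ∧ a.2 = q2 ∧ b.1 = q1 + 1 ∧ b.2 = q2) ∨
     (b.1 = q1 ∧ b.2 = q2 ∧ a.1 = q1 + 1 ∧ a.2 = q2) then 1 else 0

/-- Indicator: step `a → b` traverses the vertical edge from `(q1,q2)` to `(q1,q2+1)`. -/
def usedV (q1 q2 : ℤ) (a b : P2) : ZMod 2 :=
  if (a.1 = q1 ∧ a.2 = q2 ∧ b.1 = q1 ∧ b.2 = q2 + 1) ∨
     (b.1 = q1 ∧ b.2 = q2 ∧ a.1 = q1 ∧ a.2 = q2 + 1) then 1 else 0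

def psiH (q1 q2 : ℤ) (x : P2) : ZMod 2 := if x.2 = q2 ∧ q1 < x.1 then 1 else 0

/-- Sum of `f` over consecutive pairs of a list. -/
def stepSum (f : P2 → P2 → ZMod 2) : List P2 → ZMod 2
  | a :: b :: t => f a b + stepSum f (b :: t)
  | _ => 0

/-- Winding number (mod 2) of a lattice path around the cell with lower-left corner
`(p1, p2)`. -/
def wind (p1 p2 : ℤ) (l : List P2) : ZMod 2 := stepSum (cross p1 p2) l

lemma stepSum_congr {f g : P2 → P2 → ZMod 2} {Rel : P2 → P2 → Prop}
    (hfg : ∀ a b, Rel a b → f a b = g a b) :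
    ∀ l : List P2, List.IsChain Rel l → stepSum f l = stepSum g l
  | [], _ => rfl
  | [_], _ => rfl
  | a :: b :: t, hc => by
    rw [List.isChain_cons_cons] at hc
    show f a b + stepSum f (b :: t) = g a b + stepSum g (b :: t)
    rw [hfg a b hc.1, stepSum_congr hfg (b :: t) hc.2]

lemma stepSum_add (f g : P2 → P2 → ZMod 2) :
    ∀ l : List P2, stepSum (fun a b => f a b + g a b) l = stepSum f l + stepSum g l
  | [] => by simp [stepSum]
  | [_] => by simp [stepSum]
  | a :: b :: t => by
    show (f a b + g a b) + stepSum (fun a b => f a b + g a b) (b :: t) = _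
    rw [stepSum_add f g (b :: t)]
    show _ = (f a b + stepSum f (b :: t)) + (g a b + stepSum g (b :: t))
    ring

lemma stepSum_tele (ψ : P2 → ZMod 2) (d : P2) :
    ∀ l : List P2, stepSum (fun a b => ψ a + ψ b) l = ψ (l.head?.getD d) + ψ (l.getLast?.getD d)
  | [] => by
    have : ∀ x : ZMod 2, 0 = x + x := by decide
    simpa [stepSum] using this (ψ d)
  | [a] => by
    have : ∀ x : ZMod 2, 0 = x + x := by decide
    simpa [stepSum] using this (ψ a)
  | a :: b :: t => by
    show ψ a + ψ b + stepSum (fun a b => ψ a + ψ b) (b :: t) = _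
    rw [stepSum_tele ψ d (b :: t)]
    simp only [List.head?_cons, List.getLast?_cons_cons, Option.getD_some]
    have : ∀ x y z : ZMod 2, x + y + (y + z) = x + z := by decide
    exact this _ _ _

lemma stepSum_zero {f : P2 → P2 → ZMod 2} :
    ∀ l : List P2, (∀ a ∈ l, ∀ b ∈ l, f a b = 0) → stepSum f l = 0
  | [], _ => rfl
  | [_], _ => rfl
  | a :: b :: t, hz => by
    show f a b + stepSum f (b :: t) = 0
    rw [hz a (by simp) b (by simp),
      stepSum_zero (b :: t) (fun x hx y hy =>
        hz x (List.mem_cons_of_mem _ hx) y (List.mem_cons_of_mem _ hy))]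
    simp

lemma stepSum_append_last (f : P2 → P2 → ZMod 2) (x : P2) :
    ∀ (l : List P2) (d : P2), l ≠ [] →
      stepSum f (l ++ [x]) = stepSum f l + f (l.getLast?.getD d) x
  | [], _, hne => absurd rfl hne
  | [a], _, _ => by simp [stepSum]
  | a :: b :: t, d, _ => by
    show f a b + stepSum f ((b :: t) ++ [x]) = _
    rw [stepSum_append_last f x (b :: t) d (by simp), List.getLast?_cons_cons]
    show _ = (f a b + stepSum f (b :: t)) + f ((b :: t).getLast?.getD d) x
    ring

/-- Far cells have winding number zero. -/
lemma wind_far (p1 p2 : ℤ) : ∀ l : List P2, (∀ x ∈ l, x.1 ≤ p1) → wind p1 p2 l = 0 := by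
  intro l hl
  apply stepSum_zero
  intro a ha b _
  have := hl a ha
  simp only [cross]
  rw [if_neg]
  omega

lemma usedH_sum_zero₁ (q1 q2 : ℤ) (l : List P2)
    (hz : ∀ z ∈ l, ¬(z.1 = q1 ∧ z.2 = q2)) : stepSum (usedH q1 q2) l = 0 := by
  apply stepSum_zero
  intro a ha b hb
  have h1 := hz a ha; have h2 := hz b hb
  simp only [usedH]
  rw [if_neg]
  omega

lemma usedH_sum_zero₂ (q1 q2 : ℤ) (l : List P2)
    (hz : ∀ z ∈ l, ¬(z.1 = q1 + 1 ∧ z.2 = q2)) : stepSum (usedH q1 q2) l = 0 := by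
  apply stepSum_zero
  intro a ha b hb
  have h1 := hz a ha; have h2 := hz b hb
  simp only [usedH]
  rw [if_neg]
  omega

lemma usedV_sum_zero₁ (q1 q2 : ℤ) (l : List P2)
    (hz : ∀ z ∈ l, ¬(z.1 = q1 ∧ z.2 = q2)) : stepSum (usedV q1 q2) l = 0 := by
  apply stepSum_zero
  intro a ha b hb
  have h1 := hz a ha; have h2 := hz b hb
  simp only [usedV]
  rw [if_neg]
  omega

set_option maxHeartbeats 1000000 in
/-- The two cells on either side of a vertical edge have winding numbers differing by the
number of traversals of that edge. -/
lemma windV (q1 q2 : ℤ) (l : List P2) (hc : List.IsChain Adj1 l) :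
    wind (q1 - 1) q2 l + wind q1 q2 l + stepSum (usedV q1 q2) l = 0 := by
  have h1 : wind (q1 - 1) q2 l + wind q1 q2 l + stepSum (usedV q1 q2) l
      = stepSum (fun a b => cross (q1 - 1) q2 a b + cross q1 q2 a b + usedV q1 q2 a b) l := by
    rw [stepSum_add, stepSum_add]; rfl
  rw [h1, stepSum_congr (g := fun _ _ => 0) ?_ l hc]
  · exact stepSum_zero l (fun _ _ _ _ => rfl)
  · intro a b hab
    unfold Adj1 at hab
    simp only [cross, usedV]
    split_ifs <;> first | rfl | decide | (exfalso; omega)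

set_option maxHeartbeats 4000000 in
/-- The two cells above and below a horizontal edge have winding numbers differing by the
number of traversals of that edge, provided the path is closed. -/
lemma windH (q1 q2 : ℤ) (l : List P2) (hc : List.IsChain Adj1 l)
    (hcl : l.head? = l.getLast?) :
    wind q1 (q2 - 1) l + wind q1 q2 l + stepSum (usedH q1 q2) l = 0 := by
  have h1 : wind q1 (q2 - 1) l + wind q1 q2 l + stepSum (usedH q1 q2) l
      = stepSum (fun a b => cross q1 (q2 - 1) a b + cross q1 q2 a b + usedH q1 q2 a b) l := by
    rw [stepSum_add, stepSum_add]; rfl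
  rw [h1, stepSum_congr (g := fun a b => psiH q1 q2 a + psiH q1 q2 b) ?_ l hc]
  · rw [stepSum_tele (psiH q1 q2) (q1, q2) l, hcl]
    have : ∀ x : ZMod 2, x + x = 0 := by decide
    exact this _
  · intro a b hab
    unfold Adj1 at hab
    simp only [cross, usedH, psiH]
    split_ifs <;> first | rfl | decide | (exfalso; omega)

lemma zeq2 {a b c : ZMod 2} (h : a + b + c = 0) (hc : c = 0) : a = b := by
  subst hc; revert h; revert a b; decide

lemma zeq3 {a b c : ZMod 2} (h : a + b + c = 0) (hb : b = 0) (hc : c = 0) : a = 0 := by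
  subst hb; subst hc; simpa using h

lemma zcontra {a b c : ZMod 2} (h : a + b + c = 0) (ha : a = 0) (hb : b = 0)
    (hc : c = 1) : False := by
  subst ha; subst hb; subst hc; simp at h

/-- Winding number is the same around two adjacent cells, provided the (closed) path avoids
the two corresponding lattice points. -/
lemma wind_adj_eq (l : List P2) (hc : List.IsChain Adj1 l) (hcl : l.head? = l.getLast?)
    (x1 x2 y1 y2 : ℤ) (hadj : (x1 - y1).natAbs + (x2 - y2).natAbs = 1)
    (hx : ∀ z ∈ l, ¬(z.1 = x1 ∧ z.2 = x2)) (hy : ∀ z ∈ l, ¬(z.1 = y1 ∧ z.2 = y2)) :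
    wind x1 x2 l = wind y1 y2 l := by
  have hcases : (y1 = x1 + 1 ∧ y2 = x2) ∨ (y1 = x1 - 1 ∧ y2 = x2) ∨
      (y1 = x1 ∧ y2 = x2 + 1) ∨ (y1 = x1 ∧ y2 = x2 - 1) := by omega
  rcases hcases with ⟨e1, e2⟩ | ⟨e1, e2⟩ | ⟨e1, e2⟩ | ⟨e1, e2⟩ <;> rw [e1, e2]
  · have hW := windV (x1 + 1) x2 l hc
    have e : x1 + 1 - 1 = x1 := by ring
    rw [e] at hW
    refine zeq2 hW (usedV_sum_zero₁ _ _ l ?_)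
    intro z hz; have := hy z hz; omega
  · have hW := windV x1 x2 l hc
    refine (zeq2 hW (usedV_sum_zero₁ _ _ l ?_)).symm
    intro z hz; have := hx z hz; omega
  · have hW := windH x1 (x2 + 1) l hc hcl
    have e : x2 + 1 - 1 = x2 := by ring
    rw [e] at hW
    refine zeq2 hW (usedH_sum_zero₁ _ _ l ?_)
    intro z hz; have := hy z hz; omega
  · have hW := windH x1 x2 l hc hcl
    refine (zeq2 hW (usedH_sum_zero₁ _ _ l ?_)).symm
    intro z hz; have := hx z hz; omega

/-- Winding number of a closed path is constant along a walk in the induced graph on a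
set avoided by the path. -/
lemma wind_const {S : Set P2} (l : List P2) (hc : List.IsChain Adj1 l)
    (hcl : l.head? = l.getLast?) (hdis : ∀ z ∈ l, z ∉ S) :
    ∀ {x y : ↥S} (_ : (gridGraph.induce S).Walk x y),
      wind (x : P2).1 (x : P2).2 l = wind (y : P2).1 (y : P2).2 l := by
  intro x y W
  induction W with
  | nil => rfl
  | cons hadj W ih =>
    refine Eq.trans ?_ ih
    rename_i a b c
    have hadj' : Adj1 (a : P2) (b : P2) := hadj
    refine wind_adj_eq l hc hcl _ _ _ _ hadj' ?_ ?_
    · intro z hz hzc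
      exact hdis z hz (by rw [pext hzc.1 hzc.2]; exact a.2)
    · intro z hz hzc
      exact hdis z hz (by rw [pext hzc.1 hzc.2]; exact b.2)


/-- The main argument, assuming WLOG that `u` is a horizontal neighbor of `h`. -/
lemma main (R : Set P2) (hfin : R.Finite) (hsc : SimplyConnected R)
    (h u u' w : P2) (hhR : h ∈ R) (hne : u ≠ u') (hnbrs : nbrsIn R h = {u, u'})
    (hwR : w ∉ R) (hadjuw : Adj1 u w) (hadju'w : Adj1 u' w)
    (hu : u ∈ R \ {h}) (hu' : u' ∈ R \ {h}) (hu2 : u.2 = h.2)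
    (r : (gridGraph.induce (R \ {h})).Reachable ⟨u, hu⟩ ⟨u', hu'⟩) : False := by
  classical
  -- basic adjacency facts
  have hadjhu : Adj1 h u := by
    have : u ∈ nbrsIn R h := by rw [hnbrs]; left; rfl
    exact this.2
  have hadjhu' : Adj1 h u' := by
    have : u' ∈ nbrsIn R h := by rw [hnbrs]; right; rfl
    exact this.2
  have hneC : ¬(u.1 = u'.1 ∧ u.2 = u'.2) := fun hc => hne (pext hc.1 hc.2)
  have hwh : ¬(w.1 = h.1 ∧ w.2 = h.2) := fun hc => hwR (by rw [pext hc.1 hc.2]; exact hhR)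
  unfold Adj1 at hadjhu hadjhu' hadjuw hadju'w
  have hu1 : u.1 = h.1 + 1 ∨ u.1 = h.1 - 1 := by omega
  have hv' : u'.1 = h.1 ∧ (u'.2 = h.2 + 1 ∨ u'.2 = h.2 - 1) := by omega
  have hw : w.1 = u.1 ∧ w.2 = u'.2 := by omega
  have hOnly : ∀ z : P2, z ∈ R → Adj1 h z → z = u ∨ z = u' := by
    intro z hz haz
    have : z ∈ nbrsIn R h := ⟨hz, haz⟩
    rw [hnbrs] at this
    simpa using this
  -- the path and the closed cycle γ
  obtain ⟨p⟩ := r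
  set L : List P2 := p.support.map Subtype.val with hLdef
  set T : List P2 := p.support.tail.map Subtype.val with hTdef
  have hL : L = u :: T := by
    rw [hLdef, hTdef, p.support_eq_cons]; rfl
  have hLmem : ∀ z ∈ L, z ∈ R ∧ ¬(z.1 = h.1 ∧ z.2 = h.2) := by
    intro z hz
    rw [hLdef] at hz
    obtain ⟨a, ha, rfl⟩ := List.mem_map.mp hz
    have h2 := a.2
    refine ⟨h2.1, fun hc => h2.2 ?_⟩
    simp only [Set.mem_singleton_iff]
    exact pext hc.1 hc.2
  have hLchain : List.IsChain Adj1 L := by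
    rw [hLdef]
    rw [List.isChain_map]
    exact p.isChain_adj_support
  have hLlast : L.getLast? = some u' := by
    rw [hLdef, List.getLast?_map,
      List.getLast?_eq_getLast (p.support_ne_nil), p.getLast_support]
    rfl
  set γ : List P2 := h :: L ++ [h] with hγdef
  have hγchain : List.IsChain Adj1 γ := by
    rw [hγdef, hL]
    refine List.IsChain.cons_cons (by unfold Adj1; omega) ?_
    show List.IsChain Adj1 ((u :: T) ++ [h])
    rw [List.isChain_append]
    refine ⟨by rw [← hL]; exact hLchain, List.isChain_singleton h, ?_⟩
    intro x hx y hy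
    rw [← hL, hLlast] at hx
    simp only [Option.mem_def, Option.some.injEq] at hx
    simp only [List.head?_cons, Option.mem_def, Option.some.injEq] at hy
    subst hx; subst hy
    unfold Adj1; omega
  have hγclosed : γ.head? = γ.getLast? := by
    rw [hγdef]
    have : (h :: L ++ [h]) = ((h :: L) ++ [h]) := by simp
    rw [this, List.getLast?_concat]
    simp
  have hγR : ∀ z ∈ γ, z ∈ R := by
    intro z hz
    rw [hγdef] at hz
    have hz2 : z = h ∨ z ∈ L := by
      rcases List.mem_append.mp hz with hz1 | hz1
      · rcases List.mem_cons.mp hz1 with hz2 | hz2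
        · exact Or.inl hz2
        · exact Or.inr hz2
      · exact Or.inl (by simpa using hz1)
    rcases hz2 with h1 | h1
    · rw [h1]; exact hhR
    · exact (hLmem z h1).1
  -- winding number vanishes on cells at complement vertices
  obtain ⟨M, hM⟩ := (hfin.image Prod.fst).bddAbove
  have K : ∀ v : P2, v ∉ R → wind v.1 v.2 γ = 0 := by
    intro v hv
    have hfarR : ((M + 1 : ℤ), (0 : ℤ)) ∉ R := by
      intro hcon
      have := hM (Set.mem_image_of_mem Prod.fst hcon)
      simp only [Prod.fst] at this
      omega
    have reach := hsc.2.preconnected ⟨v, hv⟩ ⟨(M + 1, 0), hfarR⟩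
    obtain ⟨W⟩ := reach
    have h1 := wind_const (S := Rᶜ) γ hγchain hγclosed (fun z hz hzc => hzc (hγR z hz)) W
    refine h1.trans ?_
    refine wind_far _ _ γ ?_
    intro x hx
    show x.1 ≤ M + 1
    have := hM (Set.mem_image_of_mem Prod.fst (hγR x hx))
    omega
  have C : ∀ v : P2, v ∉ R →
      wind v.1 v.2 γ = 0 ∧ wind (v.1 - 1) v.2 γ = 0 ∧ wind v.1 (v.2 - 1) γ = 0 ∧
        wind (v.1 - 1) (v.2 - 1) γ = 0 := by
    intro v hv
    have hvγ : ∀ z ∈ γ, ¬(z.1 = v.1 ∧ z.2 = v.2) := by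
      intro z hz hc
      exact hv (by rw [← pext hc.1 hc.2]; exact hγR z hz)
    have c0 : wind v.1 v.2 γ = 0 := K v hv
    have c1 : wind (v.1 - 1) v.2 γ = 0 :=
      zeq3 (windV v.1 v.2 γ hγchain) c0 (usedV_sum_zero₁ _ _ γ hvγ)
    have c2 : wind v.1 (v.2 - 1) γ = 0 :=
      zeq3 (windH v.1 v.2 γ hγchain hγclosed) c0 (usedH_sum_zero₁ _ _ γ hvγ)
    have c3 : wind (v.1 - 1) (v.2 - 1) γ = 0 := by
      refine zeq3 (windH (v.1 - 1) v.2 γ hγchain hγclosed) c1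
        (usedH_sum_zero₂ _ _ γ ?_)
      intro z hz
      have := hvγ z hz
      omega
    exact ⟨c0, c1, c2, c3⟩
  -- the edge {h, u} is traversed exactly once
  have hused : ∀ q1 : ℤ, ((q1 = h.1 ∧ q1 + 1 = u.1) ∨ (q1 = u.1 ∧ q1 + 1 = h.1)) →
      stepSum (usedH q1 h.2) γ = 1 := by
    intro q1 hq
    rw [hγdef, hL]
    show usedH q1 h.2 h u + stepSum (usedH q1 h.2) ((u :: T) ++ [h]) = 1
    rw [stepSum_append_last (usedH q1 h.2) h (u :: T) u (by simp), ← hL, hLlast]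
    simp only [Option.getD_some]
    have hmid : stepSum (usedH q1 h.2) L = 0 := by
      apply stepSum_zero
      intro a ha b hb
      have h1 := (hLmem a ha).2
      have h2 := (hLmem b hb).2
      simp only [usedH]
      rw [if_neg]
      try simp only [true_and, and_true]
      omega
    rw [hmid]
    have hlastz : usedH q1 h.2 u' h = 0 := by
      simp only [usedH]
      rw [if_neg]
      try simp only [true_and, and_true]
      omega
    have hfirst : usedH q1 h.2 h u = 1 := by
      simp only [usedH]
      rw [if_pos]
      try simp only [true_and, and_true]
      omega
    rw [hlastz, hfirst]
    decide
  -- final contradiction, by cases on the four configurations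
  have hwnR : w ∉ R := hwR
  rcases hv'.2 with h2 | h2 <;> rcases hu1 with h1 | h1
  · -- u' above, u right : q = (h.1, h.2)
    have hA : wind h.1 h.2 γ = 0 := by
      have := (C w hwnR).2.2.2
      have e1 : w.1 - 1 = h.1 := by omega
      have e2 : w.2 - 1 = h.2 := by omega
      rwa [e1, e2] at this
    have hvd : ((h.1 : ℤ), h.2 - 1) ∉ R := by
      intro hcon
      rcases hOnly _ hcon (by unfold Adj1; simp) with hh | hh <;>
        · rw [Prod.ext_iff] at hh; simp at hh; omega
    have hB : wind h.1 (h.2 - 1) γ = 0 := (C _ hvd).1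
    exact zcontra (windH h.1 h.2 γ hγchain hγclosed) hB hA (hused h.1 (by omega))
  · -- u' above, u left : q = (h.1 - 1, h.2)
    have hA : wind (h.1 - 1) h.2 γ = 0 := by
      have := (C w hwnR).2.2.1
      have e1 : w.1 = h.1 - 1 := by omega
      have e2 : w.2 - 1 = h.2 := by omega
      rwa [e1, e2] at this
    have hvd : ((h.1 : ℤ), h.2 - 1) ∉ R := by
      intro hcon
      rcases hOnly _ hcon (by unfold Adj1; simp) with hh | hh <;>
        · rw [Prod.ext_iff] at hh; simp at hh; omega
    have hB : wind (h.1 - 1) (h.2 - 1) γ = 0 := (C _ hvd).2.1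
    exact zcontra (windH (h.1 - 1) h.2 γ hγchain hγclosed) hB hA (hused (h.1 - 1) (by omega))
  · -- u' below, u right : q = (h.1, h.2)
    have hvu : ((h.1 : ℤ), h.2 + 1) ∉ R := by
      intro hcon
      rcases hOnly _ hcon (by unfold Adj1; simp) with hh | hh <;>
        · rw [Prod.ext_iff] at hh; simp at hh; omega
    have hA : wind h.1 h.2 γ = 0 := by
      have := (C _ hvu).2.2.1
      simpa using this
    have hB : wind h.1 (h.2 - 1) γ = 0 := by
      have := (C w hwnR).2.1
      have e1 : w.1 - 1 = h.1 := by omega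
      have e2 : w.2 = h.2 - 1 := by omega
      rwa [e1, e2] at this
    exact zcontra (windH h.1 h.2 γ hγchain hγclosed) hB hA (hused h.1 (by omega))
  · -- u' below, u left : q = (h.1 - 1, h.2)
    have hvu : ((h.1 : ℤ), h.2 + 1) ∉ R := by
      intro hcon
      rcases hOnly _ hcon (by unfold Adj1; simp) with hh | hh <;>
        · rw [Prod.ext_iff] at hh; simp at hh; omega
    have hA : wind (h.1 - 1) h.2 γ = 0 := by
      have := (C _ hvu).2.2.2
      simpa using this
    have hB : wind (h.1 - 1) (h.2 - 1) γ = 0 := by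
      have := (C w hwnR).1
      have e1 : w.1 = h.1 - 1 := by omega
      have e2 : w.2 = h.2 - 1 := by omega
      rwa [e1, e2] at this
    exact zcontra (windH (h.1 - 1) h.2 γ hγchain hγclosed) hB hA (hused (h.1 - 1) (by omega))

end HallAux

/-- A hall of a finite simply connected region is an articulation point: its two neighbors
`u` and `u'` in `R` are not connected by any path in the subgraph induced on `R \ {h}`. -/
theorem hall_is_articulation_point (R : Set (ℤ × ℤ)) (hfin : R.Finite)
    (hsc : SimplyConnected R) (h u u' : ℤ × ℤ) (hhR : h ∈ R) (hne : u ≠ u')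
    (hnbrs : nbrsIn R h = {u, u'})
    (hdiag : ∃ w : ℤ × ℤ, w ∉ R ∧ gridGraph.Adj u w ∧ gridGraph.Adj u' w)
    (hu : u ∈ R \ {h}) (hu' : u' ∈ R \ {h}) :
    ¬ (gridGraph.induce (R \ {h})).Reachable ⟨u, hu⟩ ⟨u', hu'⟩ := by
  intro r
  obtain ⟨w, hwR, hwu, hwu'⟩ := hdiag
  have hwu1 : HallAux.Adj1 u w := hwu
  have hwu'1 : HallAux.Adj1 u' w := hwu'
  have hadjhu : HallAux.Adj1 h u := by
    have : u ∈ nbrsIn R h := by rw [hnbrs]; left; rfl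
    exact this.2
  have hadjhu' : HallAux.Adj1 h u' := by
    have : u' ∈ nbrsIn R h := by rw [hnbrs]; right; rfl
    exact this.2
  have hneC : ¬(u.1 = u'.1 ∧ u.2 = u'.2) := fun hc => hne (HallAux.pext hc.1 hc.2)
  have hwh : ¬(w.1 = h.1 ∧ w.2 = h.2) := fun hc => hwR (by rw [HallAux.pext hc.1 hc.2]; exact hhR)
  by_cases hc : u.2 = h.2
  · exact HallAux.main R hfin hsc h u u' w hhR hne hnbrs hwR hwu1 hwu'1 hu hu' hc r
  · have hc2 : u'.2 = h.2 := by
      unfold HallAux.Adj1 at hadjhu hadjhu' hwu1 hwu'1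
      omega
    exact HallAux.main R hfin hsc h u' u w hhR hne.symm (hnbrs.trans (Set.pair_comm u u'))
      hwR hwu'1 hwu1 hu' hu hc2 r.symm
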